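/- Let λ be a real number with −1 < λ < 0 or 0 < λ < 1/3 (i.e., λ ≠ 0 outside the zero-stability region). Then the quadratic factor q_λ has a real root ρ with |ρ| > 1, and consequently there exists a sequence y : ℕ → ℝ satisfying the homogeneous ZeroSNet recurrence y(n+3) = α₀(λ)·y(n+2) + α₁(λ)·y(n+1) + α₂(λ)·y(n) for all n ∈ ℕ such that |y(n)| → ∞ as n → ∞. -/

import Mathlib

/-- ZeroSNet coefficient α₀(λ) = 3(1+λ)/(4λ). -/
noncomputable def zerosAlpha0 (l : ℝ) : ℝ := 3 * (1 + l) / (4 * l)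

/-- ZeroSNet coefficient α₁(λ) = −1/λ. -/
noncomputable def zerosAlpha1 (l : ℝ) : ℝ := -1 / l

/-- ZeroSNet coefficient α₂(λ) = (1+λ)/(4λ). -/
noncomputable def zerosAlpha2 (l : ℝ) : ℝ := (1 + l) / (4 * l)

/-- The quadratic factor of the ZeroSNet characteristic polynomial over ℝ:
`q_λ(ρ) = ρ² + ((λ−3)/(4λ))ρ + (1+λ)/(4λ)`. -/
noncomputable def zerosQuadFactorR (l : ℝ) (ρ : ℝ) : ℝ :=
  ρ ^ 2 + ((l - 3) / (4 * l)) * ρ + (1 + l) / (4 * l)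

/-- Outside the zero-stability region (`−1 < λ < 0` or `0 < λ < 1/3`), the quadratic factor
`q_λ` has a real root of modulus greater than 1, and consequently the homogeneous ZeroSNet
recurrence has a solution with `|y(n)| → ∞`. -/
theorem zerosnet_unstable_outside_region (l : ℝ)
    (hl : (-1 < l ∧ l < 0) ∨ (0 < l ∧ l < 1 / 3)) :
    (∃ ρ : ℝ, zerosQuadFactorR l ρ = 0 ∧ 1 < |ρ|) ∧
    ∃ y : ℕ → ℝ,
      (∀ n : ℕ, y (n + 3) = zerosAlpha0 l * y (n + 2) + zerosAlpha1 l * y (n + 1)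
        + zerosAlpha2 l * y n) ∧
      Filter.Tendsto (fun n : ℕ => |y n|) Filter.atTop Filter.atTop := by
  have hl0 : l ≠ 0 := by rcases hl with ⟨_, h⟩ | ⟨h, _⟩ <;> [exact h.ne; exact h.ne']
  have hrad : 0 < -15 * l ^ 2 - 22 * l + 9 := by
    rcases hl with ⟨h1, h2⟩ | ⟨h1, h2⟩ <;> nlinarith
  set s : ℝ := Real.sqrt (-15 * l ^ 2 - 22 * l + 9) with hs
  have hs2 : s ^ 2 = -15 * l ^ 2 - 22 * l + 9 := Real.sq_sqrt hrad.le
  have hs0 : 0 < s := Real.sqrt_pos.mpr hrad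
  set ρ : ℝ := (3 - l + s) / (8 * l) with hρ
  clear_value s
  have h8 : (8 : ℝ) * l ≠ 0 := by simp [hl0]
  clear_value ρ
  have key : 4 * l * ρ ^ 2 + (l - 3) * ρ + (1 + l) = 0 := by
    rw [hρ]
    field_simp
    ring_nf
    nlinarith [hs2]
  have hroot : zerosQuadFactorR l ρ = 0 := by
    unfold zerosQuadFactorR
    field_simp
    linear_combination key
  have habs : 1 < |ρ| := by
    rcases hl with ⟨h1, h2⟩ | ⟨h1, h2⟩
    · have hneg : ρ < -1 := by
        rw [hρ, div_lt_iff_of_neg (by nlinarith : 8 * l < 0)]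
        nlinarith [hs2, hs0]
      calc (1 : ℝ) < -ρ := by linarith
        _ ≤ |ρ| := neg_le_abs ρ
    · have hpos : 1 < ρ := by
        rw [hρ, lt_div_iff₀ (by nlinarith : (0:ℝ) < 8 * l)]
        nlinarith [hs0]
      exact lt_of_lt_of_le hpos (le_abs_self ρ)
  have hcubic : ρ ^ 3 = zerosAlpha0 l * ρ ^ 2 + zerosAlpha1 l * ρ + zerosAlpha2 l := by
    unfold zerosAlpha0 zerosAlpha1 zerosAlpha2
    field_simp
    linear_combination (ρ - 1) * key
  refine ⟨⟨ρ, hroot, habs⟩, fun n => ρ ^ n, fun n => ?_, ?_⟩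
  · simp only [pow_add]
    linear_combination ρ ^ n * hcubic
  · simpa [abs_pow] using tendsto_pow_atTop_atTop_of_one_lt habs
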